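/- If T is an essentially small triangulated category and the Grothendieck group K_0 of its idempotent completion T~ is trivial, then the inclusion T → T~ is an equivalence, i.e., T is idempotent complete. -/

import Mathlib

open CategoryTheory Limits ZeroObject Pretriangulated

universe w v u v' u' v'' u''

namespace Paper

section K0

variable (T : Type u) [Category.{v} T] [HasZeroObject T] [Preadditive T]
  [HasShift T ℤ] [∀ n : ℤ, (shiftFunctor T n).Additive] [Pretriangulated T]

/-- The generating relations of the Grothendieck group of a pretriangulated category:
for every distinguished triangle `X ⟶ Y ⟶ Z ⟶ X⟦1⟧`, we impose `[Y] = [X] + [Z]`. -/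
def K0Rels : Set (FreeAbelianGroup (Quotient (isIsomorphicSetoid T))) :=
  { x | ∃ Tr : Triangle T, (Tr ∈ distTriang T) ∧
      x = FreeAbelianGroup.of (Quotient.mk (isIsomorphicSetoid T) Tr.obj₂) -
          FreeAbelianGroup.of (Quotient.mk (isIsomorphicSetoid T) Tr.obj₁) -
          FreeAbelianGroup.of (Quotient.mk (isIsomorphicSetoid T) Tr.obj₃) }

/-- The Grothendieck group `K₀` of a pretriangulated category: the free abelian group
on isomorphism classes of objects, modulo the relations coming from distinguished
triangles. -/
def K0 : Type u :=
  FreeAbelianGroup (Quotient (isIsomorphicSetoid T)) ⧸ AddSubgroup.closure (K0Rels T)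

instance : AddCommGroup (K0 T) :=
  inferInstanceAs (AddCommGroup (_ ⧸ AddSubgroup.closure (K0Rels T)))

variable {T}
variable {T' : Type u'} [Category.{v'} T'] [HasZeroObject T'] [Preadditive T']
  [HasShift T' ℤ] [∀ n : ℤ, (shiftFunctor T' n).Additive] [Pretriangulated T']

/-- The homomorphism `K₀(T) → K₀(T')` induced by a triangulated functor. -/
noncomputable def K0Map (F : T ⥤ T') [F.CommShift ℤ] [F.IsTriangulated] :
    K0 T →+ K0 T' :=
  QuotientAddGroup.map _ _
    (FreeAbelianGroup.map
      (Quotient.map F.obj fun _ _ h => h.elim fun e => ⟨F.mapIso e⟩))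
    (by
      refine (AddSubgroup.closure_le _).2 ?_
      rintro x ⟨Tr, hTr, rfl⟩
      simp only [SetLike.mem_coe, AddSubgroup.mem_comap]
      refine AddSubgroup.subset_closure
        (⟨F.mapTriangle.obj Tr, F.map_distinguished _ hTr, ?_⟩ : _ ∈ K0Rels T')
      simp [map_sub, FreeAbelianGroup.map_of_apply, Quotient.map_mk])

/-- `ι : T ⥤ T'` exhibits `T'` as the idempotent completion of `T` : it is a fully
faithful functor into an idempotent complete category such that every object of `T'`
is a direct summand (retract) of an object coming from `T`. -/
structure IsIdempotentCompletion {A : Type u} [Category.{v} A] {A' : Type u'}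
    [Category.{v'} A'] (ι : A ⥤ A') : Prop where
  full : ι.Full
  faithful : ι.Faithful
  complete : IsIdempotentComplete A'
  dense : ∀ Y : A', ∃ (X : A) (s : Y ⟶ ι.obj X) (r : ι.obj X ⟶ Y), s ≫ r = 𝟙 Y

end K0

end Paper

set_option linter.unusedSectionVars false

instance {X : Type*} [Category X] : Membership X (ObjectProperty X) := ⟨fun P x => P x⟩

namespace ThomasonAux

section Biprod
variable {C : Type*} [Category C] [Preadditive C] [HasBinaryBiproducts C]

noncomputable def biprodAssoc (X Y Z : C) : (X ⊞ Y) ⊞ Z ≅ X ⊞ (Y ⊞ Z) where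
  hom := biprod.lift (biprod.fst ≫ biprod.fst) (biprod.lift (biprod.fst ≫ biprod.snd) biprod.snd)
  inv := biprod.lift (biprod.lift biprod.fst (biprod.snd ≫ biprod.fst)) (biprod.snd ≫ biprod.snd)
  hom_inv_id := by ext <;> simp
  inv_hom_id := by ext <;> simp

noncomputable def biprodZero [HasZeroObject C] (X : C) : X ⊞ (0 : C) ≅ X where
  hom := biprod.desc (𝟙 X) 0
  inv := biprod.inl
  hom_inv_id := by
    ext
    simp
  inv_hom_id := by simp

noncomputable def biprodMapIso {W X Y Z : C} (e : W ≅ Y) (f : X ≅ Z) : W ⊞ X ≅ Y ⊞ Z where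
  hom := biprod.map e.hom f.hom
  inv := biprod.map e.inv f.inv
  hom_inv_id := by ext <;> simp
  inv_hom_id := by ext <;> simp

noncomputable def biprodShuffle (W X Y Z : C) : (W ⊞ X) ⊞ (Y ⊞ Z) ≅ (W ⊞ Y) ⊞ (X ⊞ Z) where
  hom := biprod.lift (biprod.map biprod.fst biprod.fst) (biprod.map biprod.snd biprod.snd)
  inv := biprod.lift (biprod.map biprod.fst biprod.fst) (biprod.map biprod.snd biprod.snd)
  hom_inv_id := by ext <;> simp
  inv_hom_id := by ext <;> simp

noncomputable def piBoolIso (f : Bool → C) [HasProduct f] : (∏ᶜ f) ≅ f true ⊞ f false where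
  hom := biprod.lift (Pi.π f true) (Pi.π f false)
  inv := Pi.lift (fun j => by cases j; exacts [biprod.snd, biprod.fst])
  hom_inv_id := by
    refine limit.hom_ext fun ⟨j⟩ => ?_
    cases j <;> simp
  inv_hom_id := by ext <;> simp

end Biprod

section Main

variable {T : Type u} [Category.{v} T] [HasZeroObject T] [Preadditive T]
  [HasShift T ℤ] [∀ n : ℤ, (shiftFunctor T n).Additive] [Pretriangulated T]
  {T' : Type u'} [Category.{v'} T'] [HasZeroObject T'] [Preadditive T']
  [HasShift T' ℤ] [∀ n : ℤ, (shiftFunctor T' n).Additive] [Pretriangulated T']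
  (ι : T ⥤ T') [ι.CommShift ℤ] [ι.IsTriangulated]

lemma essImage_zero : (0 : T') ∈ ι.essImage :=
  ⟨0, ⟨ι.mapZeroObject⟩⟩

lemma essImage_biprod {a b : T'} (ha : a ∈ ι.essImage) (hb : b ∈ ι.essImage) :
    (a ⊞ b) ∈ ι.essImage := by
  haveI : PreservesBinaryBiproducts ι := preservesBinaryBiproducts_of_preservesBiproducts ι
  obtain ⟨X, ⟨e⟩⟩ := ha
  obtain ⟨Y, ⟨f⟩⟩ := hb
  exact ⟨X ⊞ Y, ⟨ι.mapBiprod X Y ≪≫ biprodMapIso e f⟩⟩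

lemma essImage_shift {a : T'} (n : ℤ) (ha : a ∈ ι.essImage) : a⟦n⟧ ∈ ι.essImage := by
  obtain ⟨X, ⟨e⟩⟩ := ha
  exact ⟨X⟦n⟧, ⟨(ι.commShiftIso n).app X ≪≫ (shiftFunctor T' n).mapIso e⟩⟩

lemma essImage_cocone [ι.Full] [ι.Faithful] (Tr : Triangle T') (hTr : Tr ∈ distTriang T')
    (h₁ : Tr.obj₁ ∈ ι.essImage) (h₂ : Tr.obj₂ ∈ ι.essImage) : Tr.obj₃ ∈ ι.essImage := by
  obtain ⟨X₁, ⟨e₁⟩⟩ := h₁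
  obtain ⟨X₂, ⟨e₂⟩⟩ := h₂
  obtain ⟨Z, g, h, hT⟩ := distinguished_cocone_triangle (ι.preimage (e₁.hom ≫ Tr.mor₁ ≫ e₂.inv))
  have hmap := ι.map_distinguished _ hT
  have comm : (ι.mapTriangle.obj
      (Triangle.mk (ι.preimage (e₁.hom ≫ Tr.mor₁ ≫ e₂.inv)) g h)).mor₁ ≫ e₂.hom =
      e₁.hom ≫ Tr.mor₁ := by
    show ι.map (ι.preimage (e₁.hom ≫ Tr.mor₁ ≫ e₂.inv)) ≫ e₂.hom = e₁.hom ≫ Tr.mor₁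
    simp [Functor.map_preimage]
  exact ⟨Z, ⟨Triangle.π₃.mapIso (isoTriangleOfIso₁₂ _ _ hmap hTr e₁ e₂ comm)⟩⟩

lemma essImage_middle [ι.Full] [ι.Faithful] (Tr : Triangle T') (hTr : Tr ∈ distTriang T')
    (h₁ : Tr.obj₁ ∈ ι.essImage) (h₃ : Tr.obj₃ ∈ ι.essImage) : Tr.obj₂ ∈ ι.essImage :=
  essImage_cocone ι _ (inv_rot_of_distTriang _ hTr)
    (essImage_shift ι (-1) h₃) h₁

lemma exists_complement {C : Type*} [Category C] [Preadditive C] [HasBinaryBiproducts C]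
    (hcomp : IsIdempotentComplete C) {Y M : C} (s : Y ⟶ M) (r : M ⟶ Y)
    (hsr : s ≫ r = 𝟙 Y) : ∃ Z : C, Nonempty (M ≅ Y ⊞ Z) := by
  obtain ⟨Z, i, e, hie, hei⟩ := hcomp.idempotents_split M (𝟙 M - r ≫ s) (by
    simp only [Preadditive.comp_sub, Preadditive.sub_comp, Category.comp_id,
      Category.id_comp, Category.assoc, reassoc_of% hsr]
    abel)
  haveI : IsSplitMono i := IsSplitMono.mk' ⟨e, hie⟩
  haveI : IsSplitMono s := IsSplitMono.mk' ⟨r, hsr⟩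
  have hse : s ≫ e = 0 := by
    rw [← cancel_mono i]
    simp only [Category.assoc, hei, zero_comp, Preadditive.comp_sub, Category.comp_id,
      reassoc_of% hsr, sub_self]
  have hir : i ≫ r = 0 := by
    rw [← cancel_mono s]
    have hrs : r ≫ s = 𝟙 M - e ≫ i := by rw [hei]; abel
    simp only [Category.assoc, zero_comp]
    rw [hrs]
    simp only [Preadditive.comp_sub, Category.comp_id, reassoc_of% hie, sub_self]
  refine ⟨Z, ⟨⟨biprod.lift r e, biprod.desc s i, ?_, ?_⟩⟩⟩
  · rw [biprod.lift_desc, hei]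
    abel
  · ext
    · simp [hsr]
    · simp [hse]
    · simp [hir]
    · simp [hie]

lemma key (hι : Paper.IsIdempotentCompletion ι) (Tr : Triangle T') (hTr : Tr ∈ distTriang T') :
    ∃ a' c' : T', (Tr.obj₁ ⊞ a') ∈ ι.essImage ∧ (Tr.obj₃ ⊞ c') ∈ ι.essImage ∧
      (Tr.obj₂ ⊞ (a' ⊞ c')) ∈ ι.essImage := by
  haveI := hι.full
  haveI := hι.faithful
  obtain ⟨X₁, s₁, r₁, h₁⟩ := hι.dense Tr.obj₁
  obtain ⟨Z₁, ⟨e₁⟩⟩ := exists_complement hι.complete s₁ r₁ h₁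
  obtain ⟨X₃, s₃, r₃, h₃⟩ := hι.dense Tr.obj₃
  obtain ⟨Z₃, ⟨e₃⟩⟩ := exists_complement hι.complete s₃ r₃ h₃
  have hA1 : (Tr.obj₁ ⊞ Z₁) ∈ ι.essImage := ⟨X₁, ⟨e₁⟩⟩
  have hA3 : (Tr.obj₃ ⊞ Z₃) ∈ ι.essImage := ⟨X₃, ⟨e₃⟩⟩
  let S : Bool → Triangle T' := fun b => bif b then Tr else binaryBiproductTriangle Z₁ Z₃
  have hprod : productTriangle S ∈ distTriang T' := by
    apply productTriangle_distinguished
    rintro (_ | _)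
    · exact binaryBiproductTriangle_distinguished Z₁ Z₃
    · exact hTr
  have h₁' : (productTriangle S).obj₁ ∈ ι.essImage :=
    Functor.essImage.ofIso (piBoolIso (fun j => (S j).obj₁)).symm hA1
  have h₃' : (productTriangle S).obj₃ ∈ ι.essImage :=
    Functor.essImage.ofIso (piBoolIso (fun j => (S j).obj₃)).symm hA3
  have h₂' : (productTriangle S).obj₂ ∈ ι.essImage :=
    essImage_middle ι _ hprod h₁' h₃'
  exact ⟨Z₁, Z₃, hA1, hA3,
    Functor.essImage.ofIso (piBoolIso (fun j => (S j).obj₂)) h₂'⟩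

/-- Two objects are stably equivalent if they become isomorphic after adding
direct summands from the essential image of `ι`. -/
def stRel (Y Y' : T') : Prop :=
  ∃ a b : T', a ∈ ι.essImage ∧ b ∈ ι.essImage ∧ Nonempty (Y ⊞ a ≅ Y' ⊞ b)

lemma stRel_of_iso {Y Y' : T'} (e : Y ≅ Y') : stRel ι Y Y' :=
  ⟨0, 0, essImage_zero ι, essImage_zero ι, ⟨biprodMapIso e (Iso.refl _)⟩⟩

lemma stRel_symm {Y Y' : T'} (h : stRel ι Y Y') : stRel ι Y' Y := by
  obtain ⟨a, b, ha, hb, ⟨e⟩⟩ := h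
  exact ⟨b, a, hb, ha, ⟨e.symm⟩⟩

lemma stRel_trans {X Y Z : T'} (h₁ : stRel ι X Y) (h₂ : stRel ι Y Z) : stRel ι X Z := by
  obtain ⟨a, b, ha, hb, ⟨e⟩⟩ := h₁
  obtain ⟨c, d, hc, hd, ⟨f⟩⟩ := h₂
  refine ⟨a ⊞ c, d ⊞ b, essImage_biprod ι ha hc, essImage_biprod ι hd hb, ⟨?_⟩⟩
  calc X ⊞ (a ⊞ c) ≅ (X ⊞ a) ⊞ c := (biprodAssoc _ _ _).symm
    _ ≅ (Y ⊞ b) ⊞ c := biprodMapIso e (Iso.refl _)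
    _ ≅ Y ⊞ (b ⊞ c) := biprodAssoc _ _ _
    _ ≅ Y ⊞ (c ⊞ b) := biprodMapIso (Iso.refl _) (biprod.braiding _ _)
    _ ≅ (Y ⊞ c) ⊞ b := (biprodAssoc _ _ _).symm
    _ ≅ (Z ⊞ d) ⊞ b := biprodMapIso f (Iso.refl _)
    _ ≅ Z ⊞ (d ⊞ b) := biprodAssoc _ _ _

/-- The setoid of stable equivalence. -/
def stSetoid : Setoid T' :=
  ⟨stRel ι, ⟨fun Y => stRel_of_iso ι (Iso.refl Y), stRel_symm ι, stRel_trans ι⟩⟩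

/-- The group of stable equivalence classes. -/
abbrev StG := Quotient (stSetoid ι)

lemma stRel_biprod {Y Y' Z Z' : T'} (h₁ : stRel ι Y Y') (h₂ : stRel ι Z Z') :
    stRel ι (Y ⊞ Z) (Y' ⊞ Z') := by
  obtain ⟨a, b, ha, hb, ⟨e⟩⟩ := h₁
  obtain ⟨c, d, hc, hd, ⟨f⟩⟩ := h₂
  refine ⟨a ⊞ c, b ⊞ d, essImage_biprod ι ha hc, essImage_biprod ι hb hd, ⟨?_⟩⟩
  calc (Y ⊞ Z) ⊞ (a ⊞ c) ≅ (Y ⊞ a) ⊞ (Z ⊞ c) := biprodShuffle _ _ _ _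
    _ ≅ (Y' ⊞ b) ⊞ (Z' ⊞ d) := biprodMapIso e f
    _ ≅ (Y' ⊞ Z') ⊞ (b ⊞ d) := biprodShuffle _ _ _ _

lemma stRel_shift {Y Y' : T'} (h : stRel ι Y Y') : stRel ι (Y⟦(1 : ℤ)⟧) (Y'⟦(1 : ℤ)⟧) := by
  haveI : PreservesBinaryBiproducts (shiftFunctor T' (1 : ℤ)) :=
    preservesBinaryBiproducts_of_preservesBiproducts _
  obtain ⟨a, b, ha, hb, ⟨e⟩⟩ := h
  refine ⟨a⟦(1 : ℤ)⟧, b⟦(1 : ℤ)⟧, essImage_shift ι 1 ha, essImage_shift ι 1 hb, ⟨?_⟩⟩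
  calc Y⟦(1 : ℤ)⟧ ⊞ a⟦(1 : ℤ)⟧ ≅ (Y ⊞ a)⟦(1 : ℤ)⟧ := ((shiftFunctor T' (1 : ℤ)).mapBiprod Y a).symm
    _ ≅ (Y' ⊞ b)⟦(1 : ℤ)⟧ := (shiftFunctor T' (1 : ℤ)).mapIso e
    _ ≅ Y'⟦(1 : ℤ)⟧ ⊞ b⟦(1 : ℤ)⟧ := (shiftFunctor T' (1 : ℤ)).mapBiprod Y' b

lemma stRel_shift_add (hι : Paper.IsIdempotentCompletion ι) (Y : T') :
    stRel ι (Y⟦(1 : ℤ)⟧ ⊞ Y) 0 := by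
  haveI := hι.full
  haveI := hι.faithful
  obtain ⟨a', c', h₁, h₃, h₂⟩ :=
    key ι hι _ (rot_of_distTriang _ (contractible_distinguished Y))
  -- h₁ : Y ⊞ a' ∈ A, h₂ : 0 ⊞ (a' ⊞ c') ∈ A, h₃ : Y⟦1⟧ ⊞ c' ∈ A
  have hw : (a' ⊞ c') ∈ ι.essImage :=
    Functor.essImage.ofIso (biprod.braiding _ _ ≪≫ biprodZero _) h₂
  have hbig : ((Y⟦(1 : ℤ)⟧ ⊞ Y) ⊞ (a' ⊞ c')) ∈ ι.essImage := by
    refine Functor.essImage.ofIso ?_ (essImage_biprod ι h₃ h₁)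
    calc (Y⟦(1 : ℤ)⟧ ⊞ c') ⊞ (Y ⊞ a') ≅ (Y⟦(1 : ℤ)⟧ ⊞ Y) ⊞ (c' ⊞ a') := biprodShuffle _ _ _ _
      _ ≅ (Y⟦(1 : ℤ)⟧ ⊞ Y) ⊞ (a' ⊞ c') := biprodMapIso (Iso.refl _) (biprod.braiding _ _)
  refine ⟨a' ⊞ c', (Y⟦(1 : ℤ)⟧ ⊞ Y) ⊞ (a' ⊞ c'), hw, hbig, ⟨?_⟩⟩
  exact (biprodZero _).symm ≪≫ biprod.braiding _ _

lemma stRel_triangle (hι : Paper.IsIdempotentCompletion ι) (Tr : Triangle T')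
    (hTr : Tr ∈ distTriang T') : stRel ι Tr.obj₂ (Tr.obj₁ ⊞ Tr.obj₃) := by
  obtain ⟨a', c', h₁, h₃, h₂⟩ := key ι hι Tr hTr
  refine ⟨(Tr.obj₁ ⊞ Tr.obj₃) ⊞ (a' ⊞ c'), Tr.obj₂ ⊞ (a' ⊞ c'), ?_, h₂, ⟨?_⟩⟩
  · exact Functor.essImage.ofIso (biprodShuffle _ _ _ _).symm (essImage_biprod ι h₁ h₃)
  · calc Tr.obj₂ ⊞ ((Tr.obj₁ ⊞ Tr.obj₃) ⊞ (a' ⊞ c'))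
        ≅ (Tr.obj₂ ⊞ (Tr.obj₁ ⊞ Tr.obj₃)) ⊞ (a' ⊞ c') := (biprodAssoc _ _ _).symm
      _ ≅ ((Tr.obj₁ ⊞ Tr.obj₃) ⊞ Tr.obj₂) ⊞ (a' ⊞ c') :=
          biprodMapIso (biprod.braiding _ _) (Iso.refl _)
      _ ≅ (Tr.obj₁ ⊞ Tr.obj₃) ⊞ (Tr.obj₂ ⊞ (a' ⊞ c')) := biprodAssoc _ _ _

noncomputable instance : Zero (StG ι) := ⟨Quotient.mk (stSetoid ι) (0 : T')⟩

noncomputable instance : Add (StG ι) :=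
  ⟨Quotient.map₂ (· ⊞ ·) (fun _ _ h₁ _ _ h₂ => stRel_biprod ι h₁ h₂)⟩

noncomputable instance : Neg (StG ι) :=
  ⟨Quotient.map (fun Y => Y⟦(1 : ℤ)⟧) (fun _ _ h => stRel_shift ι h)⟩

lemma stG_mk_add (Y Z : T') :
    (Quotient.mk (stSetoid ι) Y : StG ι) + Quotient.mk (stSetoid ι) Z =
      Quotient.mk (stSetoid ι) (Y ⊞ Z) := rfl

/-- The group structure on stable equivalence classes. -/
noncomputable def stGroup (hι : Paper.IsIdempotentCompletion ι) : AddCommGroup (StG ι) where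
  add := (· + ·)
  zero := 0
  neg := (- ·)
  add_assoc := by
    rintro ⟨a⟩ ⟨b⟩ ⟨c⟩
    exact Quotient.sound (stRel_of_iso ι (biprodAssoc a b c))
  zero_add := by
    rintro ⟨a⟩
    exact Quotient.sound (stRel_of_iso ι (biprod.braiding _ _ ≪≫ biprodZero a))
  add_zero := by
    rintro ⟨a⟩
    exact Quotient.sound (stRel_of_iso ι (biprodZero a))
  add_comm := by
    rintro ⟨a⟩ ⟨b⟩
    exact Quotient.sound (stRel_of_iso ι (biprod.braiding a b))
  neg_add_cancel := by
    rintro ⟨a⟩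
    exact Quotient.sound (stRel_shift_add ι hι a)
  nsmul := nsmulRec
  zsmul := zsmulRec

end Main

end ThomasonAux


/-- If `T` is an essentially small pretriangulated category and the
Grothendieck group `K₀` of its idempotent completion `T'` is trivial, then the inclusion
`T ⥤ T'` is an equivalence, i.e. `T` is idempotent complete. -/
theorem stmt0 {T : Type u} [Category.{v} T] [HasZeroObject T] [Preadditive T]
    [HasShift T ℤ] [∀ n : ℤ, (shiftFunctor T n).Additive] [Pretriangulated T]
    [EssentiallySmall.{w} T]
    {T' : Type u'} [Category.{v'} T'] [HasZeroObject T'] [Preadditive T']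
    [HasShift T' ℤ] [∀ n : ℤ, (shiftFunctor T' n).Additive] [Pretriangulated T']
    (ι : T ⥤ T') [ι.CommShift ℤ] [ι.IsTriangulated]
    (hι : Paper.IsIdempotentCompletion ι)
    (hK : Subsingleton (Paper.K0 T')) :
    ι.IsEquivalence ∧ IsIdempotentComplete T := by
  haveI := hι.full
  haveI := hι.faithful
  letI : AddCommGroup (ThomasonAux.StG ι) := ThomasonAux.stGroup ι hι
  let g : Quotient (isIsomorphicSetoid T') → ThomasonAux.StG ι :=
    Quotient.lift (fun Y => Quotient.mk (ThomasonAux.stSetoid ι) Y)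
      (fun _ _ h => Quotient.sound (ThomasonAux.stRel_of_iso ι h.some))
  let ψ : FreeAbelianGroup (Quotient (isIsomorphicSetoid T')) →+ ThomasonAux.StG ι :=
    FreeAbelianGroup.lift g
  have hψof : ∀ Y : T', ψ (FreeAbelianGroup.of (Quotient.mk (isIsomorphicSetoid T') Y)) =
      Quotient.mk (ThomasonAux.stSetoid ι) Y := fun Y => by
    simp only [ψ, FreeAbelianGroup.lift_apply_of, g, Quotient.lift_mk]
  have hcl : AddSubgroup.closure (Paper.K0Rels T') ≤ ψ.ker := by
    rw [AddSubgroup.closure_le]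
    rintro x ⟨Tr, hTr, rfl⟩
    simp only [SetLike.mem_coe, AddMonoidHom.mem_ker, map_sub, hψof]
    have h2 : (Quotient.mk (ThomasonAux.stSetoid ι) Tr.obj₂ : ThomasonAux.StG ι) =
        Quotient.mk (ThomasonAux.stSetoid ι) (Tr.obj₁ ⊞ Tr.obj₃) :=
      Quotient.sound (ThomasonAux.stRel_triangle ι hι Tr hTr)
    rw [h2, ← ThomasonAux.stG_mk_add ι]
    abel
  let φ : Paper.K0 T' →+ ThomasonAux.StG ι := QuotientAddGroup.lift _ ψ hcl
  have hsurj : ∀ Y : T', Y ∈ ι.essImage := by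
    intro Y
    have h0 : ((QuotientAddGroup.mk (FreeAbelianGroup.of
        (Quotient.mk (isIsomorphicSetoid T') Y)) : Paper.K0 T')) = 0 := @Subsingleton.elim _ hK _ _
    have h1 : (Quotient.mk (ThomasonAux.stSetoid ι) Y : ThomasonAux.StG ι) =
        Quotient.mk (ThomasonAux.stSetoid ι) (0 : T') := by
      calc Quotient.mk (ThomasonAux.stSetoid ι) Y
          = ψ (FreeAbelianGroup.of (Quotient.mk (isIsomorphicSetoid T') Y)) := (hψof Y).symm
        _ = φ (QuotientAddGroup.mk (FreeAbelianGroup.of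
              (Quotient.mk (isIsomorphicSetoid T') Y))) := rfl
        _ = 0 := by rw [h0]; exact map_zero φ
        _ = Quotient.mk (ThomasonAux.stSetoid ι) (0 : T') := rfl
    obtain ⟨a, b, ha, hb, ⟨e⟩⟩ := Quotient.exact h1
    have h0b : ((0 : T') ⊞ b) ∈ ι.essImage :=
      Functor.essImage.ofIso (biprod.braiding _ _ ≪≫ ThomasonAux.biprodZero b).symm hb
    have hYA : (Y ⊞ a) ∈ ι.essImage := Functor.essImage.ofIso e.symm h0b
    exact ThomasonAux.essImage_cocone ι _ (binaryBiproductTriangle_distinguished a Y) ha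
      (Functor.essImage.ofIso (biprod.braiding Y a) hYA)
  haveI : ι.EssSurj := ⟨fun Y => hsurj Y⟩
  haveI heq : ι.IsEquivalence := {}
  exact ⟨heq, (Idempotents.isIdempotentComplete_iff_of_equivalence ι.asEquivalence).2 hι.complete⟩
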